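/- Let R be a commutative noetherian ring with unity, let a be an ideal of R, and let f : M → N be an R-module homomorphism where both M and N are a-adically complete. Then ker f is an a-adically complete R-module. -/

import Mathlib

open Submodule

section Aux

variable {R : Type*} [CommRing R] (a : Ideal R)
variable {M : Type*} [AddCommGroup M] [Module R M]

/-- An element maps to zero in the adic completion iff it lies in every `a ^ n • ⊤`. -/
lemma adic_of_eq_zero_iff (x : M) :
    AdicCompletion.of a M x = 0 ↔ ∀ n : ℕ, x ∈ (a ^ n • ⊤ : Submodule R M) := by
  constructor
  · intro h n
    have := congrArg (fun y => (Subtype.val y) n) h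
    simpa [Submodule.Quotient.mk_eq_zero] using this
  · intro h
    ext n
    simpa [Submodule.Quotient.mk_eq_zero] using h n

/-- In a complete module, geometric series converge: we can solve
`x n = g • x (n+1) + y n` for any `g ∈ a`. -/
lemma exists_geom_solution (hM : Function.Bijective (AdicCompletion.of a M))
    {g : R} (hg : g ∈ a) (y : ℕ → M) :
    ∃ x : ℕ → M, ∀ n, x n = g • x (n + 1) + y n := by
  have hmem : ∀ (t : ℕ) (m : M), g ^ t • m ∈ (a ^ t • ⊤ : Submodule R M) :=
    fun t m => Submodule.smul_mem_smul (Ideal.pow_mem_pow hg t) trivial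
  set s : ℕ → ℕ → M := fun n t => ∑ k ∈ Finset.range t, g ^ k • y (n + k) with hsdef
  have hcauchy : ∀ n, AdicCompletion.IsAdicCauchy a M (s n) := by
    intro n
    rw [AdicCompletion.isAdicCauchy_iff]
    intro t
    rw [SModEq.sub_mem]
    have : s n t - s n (t + 1) = -(g ^ t • y (n + t)) := by
      simp [hsdef, Finset.sum_range_succ]
    rw [this]
    exact neg_mem (hmem t _)
  set c : ℕ → AdicCompletion.AdicCauchySequence a M := fun n => ⟨s n, hcauchy n⟩ with hcdef
  set x : ℕ → M := fun n =>
    Function.surjInv hM.surjective (AdicCompletion.mk a M (c n)) with hxdef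
  have hx : ∀ n, AdicCompletion.of a M (x n) = AdicCompletion.mk a M (c n) :=
    fun n => Function.surjInv_eq hM.surjective _
  -- key algebraic identity for the partial sums
  have hkey : ∀ n t, s n t - g • s (n + 1) t = y n - g ^ t • y (n + t) := by
    intro n t
    induction t with
    | zero => simp [hsdef]
    | succ t ih =>
      have h1 : s n (t + 1) = s n t + g ^ t • y (n + t) := by
        simp [hsdef, Finset.sum_range_succ]
      have h2 : s (n + 1) (t + 1) = s (n + 1) t + g ^ t • y (n + 1 + t) := by
        simp [hsdef, Finset.sum_range_succ]
      have h3 : n + 1 + t = n + (t + 1) := by omega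
      rw [h1, h2, smul_add, smul_smul, ← pow_succ', h3]
      rw [show s n t + g ^ t • y (n + t) - (g • s (n + 1) t + g ^ (t + 1) • y (n + (t + 1))) =
        (s n t - g • s (n + 1) t) + (g ^ t • y (n + t) - g ^ (t + 1) • y (n + (t + 1))) by abel,
        ih]
      abel
  refine ⟨x, fun n => ?_⟩
  have hzero : AdicCompletion.of a M (x n - (g • x (n + 1) + y n)) = 0 := by
    rw [map_sub, map_add, map_smul, hx, hx]
    ext t
    simp only [AdicCompletion.val_sub, AdicCompletion.val_add, AdicCompletion.val_smul,
      AdicCompletion.mk_apply_coe, AdicCompletion.of_apply, AdicCompletion.val_zero,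
      Submodule.mkQ_apply, AdicCompletion.val_sub_apply, AdicCompletion.val_add_apply,
      AdicCompletion.val_smul_apply, AdicCompletion.val_zero_apply]
    rw [← Submodule.Quotient.mk_smul, ← Submodule.Quotient.mk_add, ← Submodule.Quotient.mk_sub,
      Submodule.Quotient.mk_eq_zero]
    have : s n t - (g • s (n + 1) t + y n) = -(g ^ t • y (n + t)) := by
      have := hkey n t
      rw [sub_eq_iff_eq_add] at this
      rw [this]; abel
    rw [this]
    exact neg_mem (hmem t _)
  have := hM.injective (by rw [hzero, map_zero] : AdicCompletion.of a M
    (x n - (g • x (n + 1) + y n)) = AdicCompletion.of a M 0)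
  exact sub_eq_zero.mp this

/-- Membership in `span {t} • ⊤` means being of the form `t • m`. -/
lemma mem_span_singleton_smul_top {t : R} {x : M}
    (hx : x ∈ (Ideal.span {t} : Ideal R) • (⊤ : Submodule R M)) :
    ∃ m : M, x = t • m := by
  refine Submodule.smul_induction_on hx ?_ ?_
  · intro r hr m _
    obtain ⟨c, rfl⟩ := Ideal.mem_span_singleton'.mp hr
    exact ⟨c • m, by rw [smul_smul, mul_comm, ← smul_smul]⟩
  · rintro x y ⟨m1, rfl⟩ ⟨m2, rfl⟩
    exact ⟨m1 + m2, by rw [smul_add]⟩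

/-- Decomposition of elements of `(∑ g ∈ s, span {c g}) • ⊤`. -/
lemma exists_decomp (s : Finset R) (c : R → R) :
    ∀ x : M, x ∈ (∑ g ∈ s, Ideal.span {c g} : Ideal R) • (⊤ : Submodule R M) →
      ∃ z : R → M, x = ∑ g ∈ s, c g • z g := by
  classical
  induction s using Finset.induction_on with
  | empty =>
    intro x hx
    simp only [Finset.sum_empty] at hx
    rw [Submodule.zero_eq_bot, Submodule.bot_smul, Submodule.mem_bot] at hx
    exact ⟨0, by simp [hx]⟩
  | @insert g s hg ih =>
    intro x hx
    rw [Finset.sum_insert hg, Submodule.add_eq_sup, Submodule.sup_smul] at hx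
    obtain ⟨u, hu, v, hv, rfl⟩ := Submodule.mem_sup.mp hx
    obtain ⟨m, rfl⟩ := mem_span_singleton_smul_top hu
    obtain ⟨z, rfl⟩ := ih v hv
    refine ⟨Function.update z g m, ?_⟩
    rw [Finset.sum_insert hg, Function.update_self]
    congr 1
    exact Finset.sum_congr rfl fun h hh =>
      by rw [Function.update_of_ne (by rintro rfl; exact hg hh)]

end Aux

/-- If `f : M → N` is a homomorphism of `a`-adically complete modules,
then `ker f` is `a`-adically complete. -/
theorem kernel_adicComplete_of_complete
    {R : Type*} [CommRing R] [IsNoetherianRing R] (a : Ideal R)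
    {M N : Type*} [AddCommGroup M] [Module R M] [AddCommGroup N] [Module R N]
    (hM : Function.Bijective (AdicCompletion.of a M))
    (hN : Function.Bijective (AdicCompletion.of a N))
    (f : M →ₗ[R] N) :
    Function.Bijective (AdicCompletion.of a (LinearMap.ker f)) := by
  classical
  set K := LinearMap.ker f with hK
  constructor
  · -- injectivity
    rw [← LinearMap.ker_eq_bot]
    rw [LinearMap.ker_eq_bot']
    intro x hx
    have hmem := (adic_of_eq_zero_iff a x).mp hx
    have hval : ∀ n : ℕ, (x : M) ∈ (a ^ n • ⊤ : Submodule R M) := by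
      intro n
      have : (x : M) ∈ Submodule.map K.subtype (a ^ n • ⊤ : Submodule R K) :=
        Submodule.mem_map_of_mem (hmem n)
      rw [Submodule.map_smul''] at this
      exact Submodule.smul_mono le_rfl le_top this
    have : AdicCompletion.of a M (x : M) = 0 := (adic_of_eq_zero_iff a _).mpr hval
    have : (x : M) = 0 := hM.injective (by rw [this, map_zero])
    exact Subtype.ext this
  · -- surjectivity
    intro ξ
    obtain ⟨k, rfl⟩ := AdicCompletion.mk_surjective a K ξ
    obtain ⟨s, hs⟩ : a.FG := IsNoetherian.noetherian a
    set J : ℕ → Ideal R := fun n => ∑ g ∈ s, Ideal.span {g ^ n} with hJ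
    have hsa : ∀ g ∈ s, g ∈ a := fun g hgs => hs ▸ Ideal.subset_span hgs
    have hspan_le : ∀ n, ∀ g ∈ s, Ideal.span {g ^ n} ≤ J n := by
      intro n g hgs
      exact Finset.single_le_sum (f := fun g => Ideal.span ({g ^ n} : Set R))
        (fun i _ => zero_le) hgs
    have hψ : ∀ n : ℕ, ∃ m : ℕ, a ^ m ≤ J n := by
      intro n
      refine Ideal.exists_pow_le_of_le_radical_of_fg ?_ ⟨s, hs⟩
      rw [← hs, Ideal.span_le]
      intro g hgs
      exact ⟨n, hspan_le n g hgs (Ideal.subset_span rfl)⟩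
    choose ψ hψ' using hψ
    set φ : ℕ → ℕ := fun n => n + ∑ i ∈ Finset.range (n + 1), ψ i with hφ
    have hφ_le : ∀ n, n ≤ φ n := fun n => Nat.le_add_right _ _
    have hφ_mono : ∀ n, φ n ≤ φ (n + 1) := by
      intro n
      refine Nat.add_le_add (Nat.le_succ n) ?_
      exact Finset.sum_le_sum_of_subset (Finset.range_subset_range.mpr (Nat.le_succ _))
    have hφ_pow : ∀ n, a ^ (φ n) ≤ J n := by
      intro n
      refine le_trans (Ideal.pow_le_pow_right ?_) (hψ' n)
      calc ψ n ≤ ∑ i ∈ Finset.range (n + 1), ψ i :=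
            Finset.single_le_sum (fun i _ => Nat.zero_le _) (Finset.self_mem_range_succ n)
        _ ≤ φ n := Nat.le_add_left _ _
    -- increments of the subsequence
    have hd : ∀ n, k (φ (n + 1)) - k (φ n) ∈ (J n) • (⊤ : Submodule R K) := by
      intro n
      have h1 := k.property (hφ_mono n)
      rw [SModEq.sub_mem] at h1
      have h2 : k (φ (n + 1)) - k (φ n) ∈ (a ^ (φ n) • ⊤ : Submodule R K) := by
        have := neg_mem h1
        rwa [neg_sub] at this
      exact Submodule.smul_mono_left (hφ_pow n) h2
    choose z hz using fun n => exists_decomp s (· ^ n) _ (hd n)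
    -- solve the geometric equations in K, using completeness of M and N
    have hKsol : ∀ g ∈ s, ∃ w : ℕ → K, ∀ n, w n = g • w (n + 1) + z n g := by
      intro g hgs
      have hga : g ∈ a := hsa g hgs
      obtain ⟨x, hx⟩ := exists_geom_solution a hM hga (fun n => ((z n g : M)))
      have hker : ∀ n, f (x n) = 0 := by
        have hzn : ∀ n, f (x n) = g • f (x (n + 1)) := by
          intro n
          rw [hx n, map_add, map_smul]
          have : f ((z n g : M)) = 0 := (z n g).2
          rw [this, add_zero]
        have hpow : ∀ t n, f (x n) ∈ (a ^ t • ⊤ : Submodule R N) := by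
          intro t
          induction t with
          | zero => intro n; simp [Ideal.one_eq_top]
          | succ t ih =>
            intro n
            rw [hzn n, pow_succ', mul_smul]
            exact Submodule.smul_mem_smul hga (ih (n + 1))
        intro n
        have : AdicCompletion.of a N (f (x n)) = 0 :=
          (adic_of_eq_zero_iff a _).mpr (fun t => hpow t n)
        exact hN.injective (by rw [this, map_zero])
      refine ⟨fun n => ⟨x n, hker n⟩, fun n => Subtype.ext ?_⟩
      simpa using hx n
    set w : R → ℕ → K := fun g =>
      if hgs : g ∈ s then (hKsol g hgs).choose else 0 with hw
    have hweq : ∀ g ∈ s, ∀ n, w g n = g • w g (n + 1) + z n g := by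
      intro g hgs n
      simp only [hw, dif_pos hgs]
      exact (hKsol g hgs).choose_spec n
    -- telescoping
    have htel : ∀ g ∈ s, ∀ n,
        w g 0 = (∑ j ∈ Finset.range n, g ^ j • z j g) + g ^ n • w g n := by
      intro g hgs n
      induction n with
      | zero => simp
      | succ n ih =>
        rw [ih, Finset.sum_range_succ, hweq g hgs n, smul_add, smul_smul, ← pow_succ]
        abel
    set m : K := k (φ 0) + ∑ g ∈ s, w g 0 with hm
    have hmk : ∀ n, m - k (φ n) ∈ (a ^ n • ⊤ : Submodule R K) := by
      intro n
      have hks : k (φ n) - k (φ 0) = ∑ j ∈ Finset.range n, (k (φ (j + 1)) - k (φ j)) :=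
        (Finset.sum_range_sub (fun j => k (φ j)) n).symm
      have hswap : ∑ j ∈ Finset.range n, (k (φ (j + 1)) - k (φ j)) =
          ∑ g ∈ s, ∑ j ∈ Finset.range n, (g : R) ^ j • z j g := by
        rw [Finset.sum_comm]
        exact Finset.sum_congr rfl fun j _ => hz j
      have : m - k (φ n) = ∑ g ∈ s, (g : R) ^ n • w g n := by
        have h1 : m - k (φ n) = (∑ g ∈ s, w g 0) - (k (φ n) - k (φ 0)) := by
          rw [hm]; abel
        rw [h1, hks, hswap, ← Finset.sum_sub_distrib]
        refine Finset.sum_congr rfl fun g hgs => ?_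
        rw [htel g hgs n]; abel
      rw [this]
      refine Submodule.sum_mem _ fun g hgs => ?_
      exact Submodule.smul_mem_smul (Ideal.pow_mem_pow (hsa g hgs) n) trivial
    refine ⟨m, ?_⟩
    ext n
    simp only [AdicCompletion.of_apply, AdicCompletion.mk_apply_coe, Submodule.mkQ_apply]
    rw [Submodule.Quotient.eq]
    have h2 : k (φ n) - k n ∈ (a ^ n • ⊤ : Submodule R K) := by
      have h1 := k.property (hφ_le n)
      rw [SModEq.sub_mem] at h1
      have := neg_mem h1
      rwa [neg_sub] at this
    have := add_mem (hmk n) h2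
    simpa using this
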